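/- Fix b with 0 < b ≤ 1 and define K_b(z) := (1/(2π)) ∫_{−1}^{1} (j_F(α)/cosh(bα)) e^{izα} dα for z ∈ ℂ, where j_F(α) := max{1 − |α|, 0}. Then there is a constant C > 0 (which may depend on b) such that |K_b(z)| ≤ C e^{|Im z|}/(1 + |z|²) for all z ∈ ℂ. -/

import Mathlib

open Filter Topology MeasureTheory Set

/-- The Fejér kernel `j_F(α) = max{1 - |α|, 0}`. -/
noncomputable def jF (α : ℝ) : ℝ := max (1 - |α|) 0

/-- The Tsang kernel `K_b(z) = (1/(2π)) ∫_{-1}^{1} (j_F(α)/cosh(bα)) e^{izα} dα`. -/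
noncomputable def Kb (b : ℝ) (z : ℂ) : ℂ :=
  (1 / (2 * Real.pi)) * ∫ α in (-1 : ℝ)..1,
    ((jF α / Real.cosh (b * α) : ℝ) : ℂ) * Complex.exp (Complex.I * z * α)

noncomputable def g (b α : ℝ) : ℝ := (1 - α) / Real.cosh (b * α)

noncomputable def g1 (b α : ℝ) : ℝ :=
  (-1 * Real.cosh (b * α) - (1 - α) * (b * Real.sinh (b * α))) / Real.cosh (b * α) ^ 2

lemma coshbne (b α : ℝ) : Real.cosh (b * α) ≠ 0 := (Real.cosh_pos _).ne'

lemma hasDerivAt_coshb (b α : ℝ) :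
    HasDerivAt (fun α => Real.cosh (b * α)) (b * Real.sinh (b * α)) α := by
  exact ((Real.hasDerivAt_cosh (b * α)).comp α ((hasDerivAt_id α).const_mul b)).congr_deriv (by ring)

lemma hasDerivAt_sinhb (b α : ℝ) :
    HasDerivAt (fun α => Real.sinh (b * α)) (b * Real.cosh (b * α)) α := by
  exact ((Real.hasDerivAt_sinh (b * α)).comp α ((hasDerivAt_id α).const_mul b)).congr_deriv (by ring)

lemma hasDerivAt_g (b α : ℝ) : HasDerivAt (g b) (g1 b α) α := by
  have h1 : HasDerivAt (fun α : ℝ => 1 - α) (-1) α := by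
    simpa using (hasDerivAt_id α).const_sub 1
  exact h1.div (hasDerivAt_coshb b α) (coshbne b α)

noncomputable def g2 (b α : ℝ) : ℝ :=
  ((-1 * (b * Real.sinh (b * α)) -
      (-1 * (b * Real.sinh (b * α)) + (1 - α) * (b * (b * Real.cosh (b * α))))) *
        Real.cosh (b * α) ^ 2 -
    (-1 * Real.cosh (b * α) - (1 - α) * (b * Real.sinh (b * α))) *
      ((2 : ℝ) * Real.cosh (b * α) ^ 1 * (b * Real.sinh (b * α)))) /
    (Real.cosh (b * α) ^ 2) ^ 2

lemma hasDerivAt_g1 (b α : ℝ) : HasDerivAt (g1 b) (g2 b α) α := by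
  have h1 : HasDerivAt (fun α : ℝ => 1 - α) (-1) α := by
    simpa using (hasDerivAt_id α).const_sub 1
  have hbs : HasDerivAt (fun α => b * Real.sinh (b * α)) (b * (b * Real.cosh (b * α))) α :=
    (hasDerivAt_sinhb b α).const_mul b
  have hN : HasDerivAt (fun α => -1 * Real.cosh (b * α) - (1 - α) * (b * Real.sinh (b * α)))
      (-1 * (b * Real.sinh (b * α)) -
        (-1 * (b * Real.sinh (b * α)) + (1 - α) * (b * (b * Real.cosh (b * α))))) α :=
    ((hasDerivAt_coshb b α).const_mul (-1)).sub (h1.mul hbs)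
  have hD : HasDerivAt (fun α => Real.cosh (b * α) ^ 2)
      ((2 : ℝ) * Real.cosh (b * α) ^ 1 * (b * Real.sinh (b * α))) α :=
    (hasDerivAt_coshb b α).pow 2
  exact hN.div hD (pow_ne_zero 2 (coshbne b α))

lemma continuous_g (b : ℝ) : Continuous (g b) := by
  apply Continuous.div (by continuity) (by continuity) (fun x => coshbne b x)

lemma continuous_g1 (b : ℝ) : Continuous (g1 b) := by
  apply Continuous.div (by continuity) (by continuity)
    (fun x => pow_ne_zero 2 (coshbne b x))

lemma continuous_g2 (b : ℝ) : Continuous (g2 b) := by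
  apply Continuous.div (by continuity) (by continuity)
    (fun x => pow_ne_zero 2 (pow_ne_zero 2 (coshbne b x)))

noncomputable def Ew (w : ℂ) (α : ℝ) : ℂ := Complex.exp (Complex.I * w * α)

lemma continuous_Ew (w : ℂ) : Continuous (Ew w) := by
  unfold Ew; continuity

lemma hasDerivAt_Ew (w : ℂ) (α : ℝ) :
    HasDerivAt (Ew w) (Ew w α * (Complex.I * w)) α := by
  have h : HasDerivAt (fun α : ℝ => Complex.I * w * (α : ℂ)) (Complex.I * w) α := by
    simpa using Complex.ofRealCLM.hasDerivAt.const_mul (Complex.I * w)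
  exact h.cexp

lemma hasDerivAt_V (w : ℂ) (hw : w ≠ 0) (α : ℝ) :
    HasDerivAt (fun α => Ew w α * (Complex.I * w)⁻¹) (Ew w α) α := by
  have := (hasDerivAt_Ew w α).mul_const (Complex.I * w)⁻¹
  have hne : Complex.I * w ≠ 0 := mul_ne_zero Complex.I_ne_zero hw
  exact this.congr_deriv (by rw [mul_assoc, mul_inv_cancel₀ hne, mul_one])

lemma ibp (b : ℝ) (w : ℂ) (hw : w ≠ 0) (u u' : ℝ → ℝ)
    (hder : ∀ x : ℝ, HasDerivAt u (u' x) x) (hcont : Continuous u') :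
    ∫ α in (0:ℝ)..1, (u α : ℂ) * Ew w α
      = (u 1 : ℂ) * (Ew w 1 * (Complex.I * w)⁻¹) - (u 0 : ℂ) * (Complex.I * w)⁻¹
        - (∫ α in (0:ℝ)..1, (u' α : ℂ) * Ew w α) * (Complex.I * w)⁻¹ := by
  have h := intervalIntegral.integral_mul_deriv_eq_deriv_mul
    (u := fun α => (u α : ℂ)) (u' := fun α => (u' α : ℂ))
    (v := fun α => Ew w α * (Complex.I * w)⁻¹) (v' := Ew w)
    (a := 0) (b := 1)
    (fun x _ => (hder x).ofReal_comp) (fun x _ => hasDerivAt_V w hw x)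
    ((Complex.continuous_ofReal.comp hcont).intervalIntegrable 0 1)
    ((continuous_Ew w).intervalIntegrable 0 1)
  rw [h]
  have h0 : Ew w 0 = 1 := by simp [Ew]
  rw [← intervalIntegral.integral_mul_const]
  simp only [h0, one_mul, mul_one, mul_assoc]

noncomputable def Bterm (b : ℝ) (w : ℂ) : ℂ :=
  (g1 b 1 : ℂ) * Ew w 1 - (g1 b 0 : ℂ) - ∫ α in (0:ℝ)..1, (g2 b α : ℂ) * Ew w α

lemma J_repr (b : ℝ) (w : ℂ) (hw : w ≠ 0) :
    ∫ α in (0:ℝ)..1, (g b α : ℂ) * Ew w α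
      = -(g b 0 : ℂ) * (Complex.I * w)⁻¹ - Bterm b w * ((Complex.I * w)⁻¹) ^ 2 := by
  rw [ibp b w hw (g b) (g1 b) (hasDerivAt_g b) (continuous_g1 b),
      ibp b w hw (g1 b) (g2 b) (hasDerivAt_g1 b) (continuous_g2 b)]
  have h1 : g b 1 = 0 := by simp [g]
  rw [h1]
  unfold Bterm
  push_cast
  ring

lemma key (b : ℝ) (z : ℂ) (hz : z ≠ 0) :
    z ^ 2 * ((∫ α in (0:ℝ)..1, (g b α : ℂ) * Ew z α)
        + ∫ α in (0:ℝ)..1, (g b α : ℂ) * Ew (-z) α)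
      = Bterm b z + Bterm b (-z) := by
  rw [J_repr b z hz, J_repr b (-z) (neg_ne_zero.mpr hz)]
  have hI : Complex.I ≠ 0 := Complex.I_ne_zero
  field_simp
  ring_nf
  have h3 : Complex.I ^ 3 = -Complex.I := by
    rw [pow_succ, Complex.I_sq]; ring
  rw [Complex.I_sq]
  ring

lemma continuous_jF : Continuous jF := by
  unfold jF; continuity

lemma split_lemma (b : ℝ) (z : ℂ) :
    (∫ α in (-1:ℝ)..1, ((jF α / Real.cosh (b * α) : ℝ) : ℂ) * Complex.exp (Complex.I * z * α))
      = (∫ α in (0:ℝ)..1, (g b α : ℂ) * Ew z α)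
        + ∫ α in (0:ℝ)..1, (g b α : ℂ) * Ew (-z) α := by
  have hcont : Continuous (fun α : ℝ => ((jF α / Real.cosh (b * α) : ℝ) : ℂ) * Ew z α) := by
    exact (Complex.continuous_ofReal.comp
      ((continuous_jF.div (by continuity) (fun x => coshbne b x)))).mul (continuous_Ew z)
  have hsplit : (∫ α in (-1:ℝ)..0, ((jF α / Real.cosh (b * α) : ℝ) : ℂ) * Ew z α)
      + (∫ α in (0:ℝ)..1, ((jF α / Real.cosh (b * α) : ℝ) : ℂ) * Ew z α)
      = ∫ α in (-1:ℝ)..1, ((jF α / Real.cosh (b * α) : ℝ) : ℂ) * Ew z α :=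
    intervalIntegral.integral_add_adjacent_intervals
      (hcont.intervalIntegrable _ _) (hcont.intervalIntegrable _ _)
  rw [show (fun α : ℝ => ((jF α / Real.cosh (b * α) : ℝ) : ℂ) * Complex.exp (Complex.I * z * α))
      = (fun α : ℝ => ((jF α / Real.cosh (b * α) : ℝ) : ℂ) * Ew z α) from rfl, ← hsplit]
  have h3 : EqOn (fun α : ℝ => ((jF α / Real.cosh (b * α) : ℝ) : ℂ) * Ew z α)
      (fun α => (g b α : ℂ) * Ew z α) (uIcc (0:ℝ) 1) := by
    intro α hα
    rw [uIcc_of_le (by norm_num : (0:ℝ) ≤ 1)] at hα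
    have hj : jF α = 1 - α := by
      unfold jF
      rw [abs_of_nonneg hα.1]
      exact max_eq_left (by linarith [hα.2])
    simp only [hj, g]
  have h4 : EqOn (fun α : ℝ => ((jF α / Real.cosh (b * α) : ℝ) : ℂ) * Ew z α)
      (fun α => (g b (-α) : ℂ) * Ew (-z) (-α)) (uIcc (-1:ℝ) 0) := by
    intro α hα
    rw [uIcc_of_le (by norm_num : (-1:ℝ) ≤ 0)] at hα
    have hj : jF α = 1 + α := by
      unfold jF
      rw [abs_of_nonpos hα.2]
      have : 1 - -α = 1 + α := by ring
      rw [this]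
      exact max_eq_left (by linarith [hα.1])
    have hg : g b (-α) = jF α / Real.cosh (b * α) := by
      rw [hj, g]
      rw [show b * -α = -(b * α) by ring, Real.cosh_neg]
      ring_nf
    have hE : Ew (-z) (-α) = Ew z α := by
      unfold Ew
      congr 1
      push_cast
      ring
    simp only [hg, hE]
  rw [intervalIntegral.integral_congr h3, intervalIntegral.integral_congr h4]
  have h5 := intervalIntegral.integral_comp_neg (a := (-1:ℝ)) (b := 0)
    (f := fun x => (g b x : ℂ) * Ew (-z) x)
  norm_num at h5
  rw [h5]
  ring

lemma Ew_bound (w : ℂ) {α : ℝ} (h0 : 0 ≤ α) (h1 : α ≤ 1) :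
    ‖Ew w α‖ ≤ Real.exp |w.im| := by
  rw [Ew, Complex.norm_exp]
  apply Real.exp_le_exp.2
  have hre : (Complex.I * w * α).re = -w.im * α := by simp [Complex.mul_re]
  rw [hre]
  nlinarith [neg_abs_le w.im, le_abs_self w.im, abs_nonneg w.im]

lemma g_bound (b : ℝ) {α : ℝ} (h0 : 0 ≤ α) (h1 : α ≤ 1) : |g b α| ≤ 1 := by
  have hc := Real.cosh_pos (x := b * α)
  rw [g, abs_div, abs_of_pos hc, div_le_one hc]
  calc |1 - α| ≤ 1 := by rw [abs_le]; constructor <;> linarith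
    _ ≤ Real.cosh (b * α) := Real.one_le_cosh _

/-- For `0 < b ≤ 1`, the Tsang kernel satisfies `|K_b(z)| ≤ C e^{|Im z|}/(1 + |z|²)`. -/
theorem Kb_bound (b : ℝ) (hb0 : 0 < b) (hb1 : b ≤ 1) :
    ∃ C > 0, ∀ z : ℂ,
      ‖Kb b z‖ ≤ C * Real.exp |z.im| / (1 + ‖z‖ ^ 2) := by
  obtain ⟨x₀, hx₀mem, hx₀⟩ := isCompact_Icc.exists_isMaxOn
    (Set.nonempty_Icc.2 (by norm_num : (0:ℝ) ≤ 1))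
    ((continuous_g2 b).abs.continuousOn (s := Icc (0:ℝ) 1))
  set M := |g2 b x₀| with hMdef
  have hM0 : 0 ≤ M := abs_nonneg _
  set C₁ := |g1 b 1| + |g1 b 0| + M with hC₁def
  have hC₁0 : 0 ≤ C₁ := by positivity
  have hπ : 0 < Real.pi := Real.pi_pos
  refine ⟨(1 + C₁) / Real.pi, by positivity, fun z => ?_⟩
  have hexp0 : 0 < Real.exp |z.im| := Real.exp_pos _
  have hexp1 : (1:ℝ) ≤ Real.exp |z.im| := Real.one_le_exp (abs_nonneg _)
  -- bound on Bterm
  have hB : ∀ w : ℂ, |w.im| = |z.im| → ‖Bterm b w‖ ≤ C₁ * Real.exp |z.im| := by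
    intro w hw
    have hA : ‖∫ α in (0:ℝ)..1, (g2 b α : ℂ) * Ew w α‖ ≤ M * Real.exp |z.im| := by
      have h := intervalIntegral.norm_integral_le_of_norm_le_const
        (C := M * Real.exp |z.im|) (f := fun α => (g2 b α : ℂ) * Ew w α) (a := 0) (b := 1) ?_
      · simpa using h
      · intro x hx
        rw [Set.uIoc_of_le (by norm_num : (0:ℝ) ≤ 1)] at hx
        rw [norm_mul, Complex.norm_real]
        have h1 : ‖g2 b x‖ ≤ M := hx₀ ⟨hx.1.le, hx.2⟩
        have h2 : ‖Ew w x‖ ≤ Real.exp |z.im| := by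
          rw [← hw]; exact Ew_bound w hx.1.le hx.2
        exact mul_le_mul h1 h2 (norm_nonneg _) hM0
    have h1 : ‖(g1 b 1 : ℂ) * Ew w 1‖ ≤ |g1 b 1| * Real.exp |z.im| := by
      rw [norm_mul, Complex.norm_real, Real.norm_eq_abs]
      have h2 : ‖Ew w 1‖ ≤ Real.exp |z.im| := by
        rw [← hw]
        exact Ew_bound w (by norm_num) (by norm_num)
      exact mul_le_mul_of_nonneg_left h2 (abs_nonneg _)
    have h0 : ‖(g1 b 0 : ℂ)‖ = |g1 b 0| := by rw [Complex.norm_real, Real.norm_eq_abs]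
    rw [Bterm]
    calc ‖(g1 b 1 : ℂ) * Ew w 1 - (g1 b 0 : ℂ)
          - ∫ α in (0:ℝ)..1, (g2 b α : ℂ) * Ew w α‖
        ≤ ‖(g1 b 1 : ℂ) * Ew w 1 - (g1 b 0 : ℂ)‖
          + ‖∫ α in (0:ℝ)..1, (g2 b α : ℂ) * Ew w α‖ :=
        norm_sub_le _ _
      _ ≤ ‖(g1 b 1 : ℂ) * Ew w 1‖ + ‖(g1 b 0 : ℂ)‖
          + ‖∫ α in (0:ℝ)..1, (g2 b α : ℂ) * Ew w α‖ := by
        have := norm_sub_le ((g1 b 1 : ℂ) * Ew w 1) ((g1 b 0 : ℂ))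
        linarith
      _ ≤ C₁ * Real.exp |z.im| := by
        rw [h0]
        rw [hC₁def]
        nlinarith [abs_nonneg (g1 b 0), hA, h1]
  -- trivial bound on each J
  have hJ : ∀ w : ℂ, |w.im| = |z.im| →
      ‖∫ α in (0:ℝ)..1, (g b α : ℂ) * Ew w α‖ ≤ Real.exp |z.im| := by
    intro w hw
    have h := intervalIntegral.norm_integral_le_of_norm_le_const
      (C := Real.exp |z.im|) (f := fun α => (g b α : ℂ) * Ew w α) (a := 0) (b := 1) ?_
    · simpa using h
    · intro x hx
      rw [Set.uIoc_of_le (by norm_num : (0:ℝ) ≤ 1)] at hx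
      rw [norm_mul, Complex.norm_real]
      have h1 : ‖g b x‖ ≤ 1 := g_bound b hx.1.le hx.2
      have h2 : ‖Ew w x‖ ≤ Real.exp |z.im| := by
        rw [← hw]; exact Ew_bound w hx.1.le hx.2
      calc ‖g b x‖ * ‖Ew w x‖ ≤ 1 * Real.exp |z.im| :=
          mul_le_mul h1 h2 (norm_nonneg _) (by norm_num)
        _ = Real.exp |z.im| := one_mul _
  -- rewrite Kb
  have hKb : Kb b z = (1 / (2 * (Real.pi : ℂ)))
      * ((∫ α in (0:ℝ)..1, (g b α : ℂ) * Ew z α)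
        + ∫ α in (0:ℝ)..1, (g b α : ℂ) * Ew (-z) α) := by
    rw [Kb, split_lemma]
  have habsc : ‖1 / (2 * (Real.pi : ℂ))‖ = 1 / (2 * Real.pi) := by
    rw [norm_div, norm_one, norm_mul, Complex.norm_two, Complex.norm_real, Real.norm_eq_abs, abs_of_pos hπ]
  -- quadratic bound
  have hquad : ‖z ^ 2 * ((∫ α in (0:ℝ)..1, (g b α : ℂ) * Ew z α)
      + ∫ α in (0:ℝ)..1, (g b α : ℂ) * Ew (-z) α)‖ ≤ 2 * (C₁ * Real.exp |z.im|) := by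
    by_cases hz : z = 0
    · rw [hz]
      simp only [ne_eq, OfNat.ofNat_ne_zero, not_false_eq_true, zero_pow, zero_mul, norm_zero]
      positivity
    · rw [key b z hz]
      have hmz : |(-z).im| = |z.im| := by rw [Complex.neg_im, abs_neg]
      calc ‖Bterm b z + Bterm b (-z)‖
          ≤ ‖Bterm b z‖ + ‖Bterm b (-z)‖ := norm_add_le _ _
        _ ≤ 2 * (C₁ * Real.exp |z.im|) := by
          have := hB z rfl
          have := hB (-z) hmz
          linarith
  -- assemble
  have hden : (0:ℝ) < 1 + ‖z‖ ^ 2 := by positivity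
  rw [le_div_iff₀ hden]
  have e1 : ‖Kb b z‖ * (1 + ‖z‖ ^ 2)
      = ‖Kb b z‖ + ‖Kb b z * z ^ 2‖ := by
    rw [norm_mul, norm_pow]; ring
  rw [e1]
  have hKb1 : ‖Kb b z‖ ≤ (1 / (2 * Real.pi)) * (2 * Real.exp |z.im|) := by
    rw [hKb, norm_mul, habsc]
    have hadd : ‖(∫ α in (0:ℝ)..1, (g b α : ℂ) * Ew z α)
        + ∫ α in (0:ℝ)..1, (g b α : ℂ) * Ew (-z) α‖ ≤ 2 * Real.exp |z.im| := by
      have hmz : |(-z).im| = |z.im| := by rw [Complex.neg_im, abs_neg]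
      have h1 := hJ z rfl
      have h2 := hJ (-z) hmz
      calc ‖_‖ ≤ ‖∫ α in (0:ℝ)..1, (g b α : ℂ) * Ew z α‖
          + ‖∫ α in (0:ℝ)..1, (g b α : ℂ) * Ew (-z) α‖ := norm_add_le _ _
        _ ≤ 2 * Real.exp |z.im| := by linarith
    exact mul_le_mul_of_nonneg_left hadd (by positivity)
  have hKb2 : ‖Kb b z * z ^ 2‖
      ≤ (1 / (2 * Real.pi)) * (2 * (C₁ * Real.exp |z.im|)) := by
    have heq : Kb b z * z ^ 2 = (1 / (2 * (Real.pi : ℂ)))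
        * (z ^ 2 * ((∫ α in (0:ℝ)..1, (g b α : ℂ) * Ew z α)
          + ∫ α in (0:ℝ)..1, (g b α : ℂ) * Ew (-z) α)) := by
      rw [hKb]; ring
    rw [heq, norm_mul, habsc]
    exact mul_le_mul_of_nonneg_left hquad (by positivity)
  have hcomb : (1 / (2 * Real.pi)) * (2 * Real.exp |z.im|)
      + (1 / (2 * Real.pi)) * (2 * (C₁ * Real.exp |z.im|))
      = (1 + C₁) / Real.pi * Real.exp |z.im| := by
    field_simp
  linarith
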